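/- The matrix C_1 (the matrix C_t at t = 1) is equivalent, via conjugation by a positive diagonal matrix, to a symmetric 10×10 matrix of signature (4,1) on its column space; more precisely, there is a positive diagonal matrix D such that D C_1 D^{-1} is symmetric, and this symmetric matrix has rank 5 with 4 positive and 1 negative eigenvalue among its nonzero eigenvalues. -/

import Mathlib

noncomputable def t3 : ℝ := (11 + 9 * Real.sqrt 2 - 3 * Real.sqrt (31 + 22 * Real.sqrt 2)) / 2

noncomputable def f (t : ℝ) : ℝ :=
  t * (t + 2) ^ 3 * (2 * t + 1) ^ 3 / ((t ^ 2 + t + 1) ^ 2 * (t ^ 2 + 7 * t + 1) ^ 2)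

noncomputable def g (p : ℕ) (t : ℝ) : ℝ :=
  2 * t ^ p * (t + 2) ^ p * (2 * t + 1) ^ (3 - p) / ((t ^ 2 + t + 1) * (t ^ 2 + 7 * t + 1))

noncomputable def gbar (p : ℕ) (t : ℝ) : ℝ := 4 * f t / g p t

noncomputable def h (t : ℝ) : ℝ :=
  2 + 1 / t + t * (t + 2) ^ 4 / ((t ^ 2 + t + 1) * (t ^ 2 + 7 * t + 1))

/-- The upper-left 5×5 block of the Cartan matrix `C_t`:
diagonal entries `2`, entry `-ḡ_{j-i-1}(t)` above and `-g_{i-j-1}(t)` below the diagonal. -/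
noncomputable def ULblock (t : ℝ) : Matrix (Fin 5) (Fin 5) ℝ := fun i j =>
  if i = j then 2
  else if i < j then -gbar ((j : ℕ) - (i : ℕ) - 1) t
  else -g ((i : ℕ) - (j : ℕ) - 1) t

/-- The lower-right 5×5 block of `C_t`: diagonal `2`, `-1/t` above, `-t` below the diagonal. -/
noncomputable def LRblock (t : ℝ) : Matrix (Fin 5) (Fin 5) ℝ := fun i j =>
  if i = j then 2
  else if i < j then -(1 / t)
  else -t

/-- The 10×10 Cartan matrix `C_t` from the paper, with rows and columns indexed by
`{1',…,5'} ⊕ {1,…,5}`.  The upper-right block is `-h(t)·Id` and the lower-left block `-2·Id`. -/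
noncomputable def C (t : ℝ) : Matrix (Fin 5 ⊕ Fin 5) (Fin 5 ⊕ Fin 5) ℝ :=
  Matrix.fromBlocks (ULblock t) (Matrix.diagonal fun _ => -h t)
    (Matrix.diagonal fun _ => -2) (LRblock t)


namespace Caux
open Matrix

noncomputable def s3 : ℝ := Real.sqrt 3

lemma s3_pos : 0 < s3 := Real.sqrt_pos.2 (by norm_num)

lemma s3_ne : s3 ≠ 0 := ne_of_gt s3_pos

lemma s3_sq : s3 ^ 2 = 3 := Real.sq_sqrt (by norm_num)

def Jmat : Matrix (Fin 5) (Fin 5) ℝ := Matrix.of fun _ _ => 1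

noncomputable def blk (a b : ℝ) : Matrix (Fin 5) (Fin 5) ℝ :=
  a • (1 : Matrix (Fin 5) (Fin 5) ℝ) + b • Jmat

lemma J_mul_J : Jmat * Jmat = (5 : ℝ) • Jmat := by
  ext i j
  simp [Jmat, Matrix.mul_apply, Fin.sum_univ_five]

lemma blk_mul (a b c d : ℝ) : blk a b * blk c d = blk (a * c) (a * d + b * c + 5 * b * d) := by
  unfold blk
  simp only [add_mul, mul_add, smul_mul_assoc, mul_smul_comm, J_mul_J, one_mul, mul_one, smul_smul]
  module

lemma blk_add (a b c d : ℝ) : blk a b + blk c d = blk (a + c) (b + d) := by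
  unfold blk; module

lemma blk_smul (r a b : ℝ) : r • blk a b = blk (r * a) (r * b) := by
  unfold blk; module

lemma blk_neg (a b : ℝ) : -blk a b = blk (-a) (-b) := by
  unfold blk; module

lemma blk_zero : blk 0 0 = 0 := by unfold blk; module

lemma blk_congr {a b a' b' : ℝ} (ha : a = a') (hb : b = b') : blk a b = blk a' b' := by
  rw [ha, hb]

noncomputable def Smat : Matrix (Fin 5 ⊕ Fin 5) (Fin 5 ⊕ Fin 5) ℝ :=
  Matrix.fromBlocks (blk 4 (-2)) (blk (-2 * s3) 0) (blk (-2 * s3) 0) (blk 3 (-1))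

lemma blk_herm (a b : ℝ) : (blk a b)ᴴ = blk a b := by
  ext i j
  simp [blk, Jmat, Matrix.conjTranspose_apply, Matrix.one_apply, eq_comm]

lemma Smat_herm : Smat.IsHermitian := by
  unfold Matrix.IsHermitian
  rw [Smat, Matrix.fromBlocks_conjTranspose]
  simp only [blk_herm]

lemma Smat_sq : Smat * Smat =
    Matrix.fromBlocks (blk 28 4) (blk (-14 * s3) (6 * s3)) (blk (-14 * s3) (6 * s3))
      (blk 21 (-1)) := by
  have e1 : blk 4 (-2) * blk 4 (-2) + blk (-2 * s3) 0 * blk (-2 * s3) 0 = blk 28 4 := by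
    rw [blk_mul, blk_mul, blk_add]
    exact blk_congr (by linear_combination 4 * s3_sq) (by ring)
  have e2 : blk 4 (-2) * blk (-2 * s3) 0 + blk (-2 * s3) 0 * blk 3 (-1)
      = blk (-14 * s3) (6 * s3) := by
    rw [blk_mul, blk_mul, blk_add]
    exact blk_congr (by ring) (by ring)
  have e3 : blk (-2 * s3) 0 * blk 4 (-2) + blk 3 (-1) * blk (-2 * s3) 0
      = blk (-14 * s3) (6 * s3) := by
    rw [blk_mul, blk_mul, blk_add]
    exact blk_congr (by ring) (by ring)
  have e4 : blk (-2 * s3) 0 * blk (-2 * s3) 0 + blk 3 (-1) * blk 3 (-1) = blk 21 (-1) := by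
    rw [blk_mul, blk_mul, blk_add]
    exact blk_congr (by linear_combination 4 * s3_sq) (by ring)
  rw [Smat, Matrix.fromBlocks_multiply, e1, e2, e3, e4]

lemma Smat_cube : Smat * Smat * Smat =
    Matrix.fromBlocks (blk 196 (-116)) (blk (-98 * s3) (-6 * s3)) (blk (-98 * s3) (-6 * s3))
      (blk 147 (-55)) := by
  have e1 : blk 28 4 * blk 4 (-2) + blk (-14 * s3) (6 * s3) * blk (-2 * s3) 0
      = blk 196 (-116) := by
    rw [blk_mul, blk_mul, blk_add]
    exact blk_congr (by linear_combination 28 * s3_sq) (by linear_combination (-12) * s3_sq)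
  have e2 : blk 28 4 * blk (-2 * s3) 0 + blk (-14 * s3) (6 * s3) * blk 3 (-1)
      = blk (-98 * s3) (-6 * s3) := by
    rw [blk_mul, blk_mul, blk_add]
    exact blk_congr (by ring) (by ring)
  have e3 : blk (-14 * s3) (6 * s3) * blk 4 (-2) + blk 21 (-1) * blk (-2 * s3) 0
      = blk (-98 * s3) (-6 * s3) := by
    rw [blk_mul, blk_mul, blk_add]
    exact blk_congr (by ring) (by ring)
  have e4 : blk (-14 * s3) (6 * s3) * blk (-2 * s3) 0 + blk 21 (-1) * blk 3 (-1)
      = blk 147 (-55) := by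
    rw [blk_mul, blk_mul, blk_add]
    exact blk_congr (by linear_combination 28 * s3_sq) (by linear_combination (-12) * s3_sq)
  rw [Smat_sq, Smat, Matrix.fromBlocks_multiply, e1, e2, e3, e4]

lemma Smat_poly : Smat * Smat * Smat + Smat * Smat - (56 : ℝ) • Smat = 0 := by
  rw [Smat_cube, Smat_sq, Smat, sub_eq_add_neg, Matrix.fromBlocks_smul, Matrix.fromBlocks_neg,
    Matrix.fromBlocks_add, Matrix.fromBlocks_add]
  have q1 : blk 196 (-116) + blk 28 4 + -((56 : ℝ) • blk 4 (-2)) = 0 := by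
    rw [blk_smul, blk_neg, blk_add, blk_add]
    exact (blk_congr (by ring) (by ring)).trans blk_zero
  have q2 : blk (-98 * s3) (-6 * s3) + blk (-14 * s3) (6 * s3) + -((56 : ℝ) • blk (-2 * s3) 0)
      = 0 := by
    rw [blk_smul, blk_neg, blk_add, blk_add]
    exact (blk_congr (by ring) (by ring)).trans blk_zero
  have q4 : blk 147 (-55) + blk 21 (-1) + -((56 : ℝ) • blk 3 (-1)) = 0 := by
    rw [blk_smul, blk_neg, blk_add, blk_add]
    exact (blk_congr (by ring) (by ring)).trans blk_zero
  rw [q1, q2, q4]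
  exact Matrix.fromBlocks_zero

lemma Smat_trace : Smat.trace = 20 := by
  simp [Matrix.trace, Matrix.diag, Fintype.sum_sum_type, Fin.sum_univ_five, Smat, blk, Jmat,
    Matrix.one_apply]
  norm_num

lemma eig_mem (i : Fin 5 ⊕ Fin 5) :
    Smat_herm.eigenvalues i = 0 ∨ Smat_herm.eigenvalues i = 7 ∨ Smat_herm.eigenvalues i = -8 := by
  have hv := Smat_herm.mulVec_eigenvectorBasis i
  set v : (Fin 5 ⊕ Fin 5) → ℝ := ⇑(Smat_herm.eigenvectorBasis i) with hvdef
  set μ := Smat_herm.eigenvalues i with hμdef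
  have hvne : v ≠ 0 := by
    intro hz
    apply Smat_herm.eigenvectorBasis.orthonormal.ne_zero i
    ext j
    exact congrFun hz j
  have h2 : Smat *ᵥ (Smat *ᵥ v) = (μ * μ) • v := by
    rw [hv, Matrix.mulVec_smul, hv, smul_smul]
  have h3 : Smat *ᵥ (Smat *ᵥ (Smat *ᵥ v)) = (μ * μ * μ) • v := by
    rw [h2, Matrix.mulVec_smul, hv, smul_smul]
  have h0 := congrArg (fun M => M *ᵥ v) Smat_poly
  simp only [Matrix.add_mulVec, Matrix.sub_mulVec, Matrix.zero_mulVec, ← Matrix.mulVec_mulVec,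
    Matrix.smul_mulVec] at h0
  rw [h3, h2, hv, smul_smul] at h0
  have hcomb : (μ * μ * μ + μ * μ - 56 * μ) • v = 0 := by
    rw [sub_smul, add_smul]
    exact h0
  have hscal : μ * μ * μ + μ * μ - 56 * μ = 0 := by
    rcases smul_eq_zero.mp hcomb with hc | hc
    · exact hc
    · exact absurd hc hvne
  have hfac : μ * ((μ - 7) * (μ + 8)) = 0 := by linear_combination hscal
  rcases mul_eq_zero.mp hfac with hc | hc
  · exact Or.inl hc
  · rcases mul_eq_zero.mp hc with hc' | hc'
    · exact Or.inr (Or.inl (by linarith))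
    · exact Or.inr (Or.inr (by linarith))

lemma eig_sum : ∑ i, Smat_herm.eigenvalues i = 20 := by
  have hsp := Smat_herm.spectral_theorem
  have htr := congrArg Matrix.trace hsp
  rw [Unitary.conjStarAlgAut_apply, Matrix.trace_mul_cycle,
    Matrix.mem_unitaryGroup_iff'.mp (Matrix.IsHermitian.eigenvectorUnitary Smat_herm).2, one_mul,
    Matrix.trace_diagonal, Smat_trace] at htr
  simpa using htr.symm

end Caux

open Caux in
open scoped Classical in
theorem C_one_signature :
    ∃ d : Fin 5 ⊕ Fin 5 → ℝ, (∀ i, 0 < d i) ∧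
      ∃ hS : (Matrix.diagonal d * C 1 * (Matrix.diagonal d)⁻¹).IsHermitian,
        (Matrix.diagonal d * C 1 * (Matrix.diagonal d)⁻¹).rank = 5 ∧
          (Finset.univ.filter fun i => 0 < hS.eigenvalues i).card = 4 ∧
          (Finset.univ.filter fun i => hS.eigenvalues i < 0).card = 1 := by
  set d : Fin 5 ⊕ Fin 5 → ℝ := Sum.elim (fun _ => (1 : ℝ)) (fun _ => s3) with hd
  have hdpos : ∀ i, 0 < d i := by
    rintro (i | i)
    · exact one_pos
    · exact s3_pos
  have hdne : ∀ i, d i ≠ 0 := fun i => ne_of_gt (hdpos i)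
  have hinv : (Matrix.diagonal d)⁻¹ = Matrix.diagonal fun i => (d i)⁻¹ := by
    apply Matrix.inv_eq_right_inv
    rw [Matrix.diagonal_mul_diagonal]
    rw [show (fun i => d i * (d i)⁻¹) = fun _ => (1 : ℝ) from
      funext fun i => mul_inv_cancel₀ (hdne i)]
    exact Matrix.diagonal_one
  have hg1 : ∀ p : ℕ, p ≤ 3 → g p 1 = 2 := by
    intro p hp
    interval_cases p <;> norm_num [g]
  have hgbar1 : ∀ p : ℕ, p ≤ 3 → gbar p 1 = 2 := by
    intro p hp
    rw [gbar, hg1 p hp]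
    norm_num [f]
  have hh1 : h 1 = 6 := by norm_num [h]
  have hM : Matrix.diagonal d * C 1 * (Matrix.diagonal d)⁻¹ = Smat := by
    rw [hinv]
    ext i j
    rw [Matrix.mul_diagonal, Matrix.diagonal_mul]
    rcases i with i | i <;> rcases j with j | j
    · simp only [hd, Sum.elim_inl, inv_one, mul_one, one_mul]
      show ULblock 1 i j = blk 4 (-2) i j
      rcases eq_or_ne i j with hij | hij
      · simp [ULblock, blk, Jmat, hij, Matrix.one_apply]
        norm_num
      · rcases lt_or_gt_of_ne hij with hlt | hgt
        · have hle : (j : ℕ) - (i : ℕ) - 1 ≤ 3 := by omega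
          simp [ULblock, blk, Jmat, hij, hlt, Matrix.one_apply, hgbar1 _ hle]
        · have hle : (i : ℕ) - (j : ℕ) - 1 ≤ 3 := by omega
          simp [ULblock, blk, Jmat, hij, not_lt_of_gt hgt, Matrix.one_apply, hg1 _ hle]
    · simp only [hd, Sum.elim_inl, Sum.elim_inr, one_mul]
      show (Matrix.diagonal fun _ => -h 1) i j * s3⁻¹ = blk (-2 * s3) 0 i j
      rcases eq_or_ne i j with hij | hij
      · subst hij
        simp [Matrix.diagonal_apply_eq, blk, Jmat, Matrix.one_apply, hh1]
        field_simp [s3_ne]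
        nlinarith [s3_sq]
      · simp [Matrix.diagonal_apply_ne _ hij, blk, Jmat, Matrix.one_apply, hij]
    · simp only [hd, Sum.elim_inl, Sum.elim_inr, inv_one, mul_one]
      show s3 * (Matrix.diagonal fun _ => (-2 : ℝ)) i j = blk (-2 * s3) 0 i j
      rcases eq_or_ne i j with hij | hij
      · subst hij
        simp [Matrix.diagonal_apply_eq, blk, Jmat, Matrix.one_apply]
        ring
      · simp [Matrix.diagonal_apply_ne _ hij, blk, Jmat, Matrix.one_apply, hij]
    · simp only [hd, Sum.elim_inr]
      show s3 * LRblock 1 i j * s3⁻¹ = blk 3 (-1) i j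
      rw [mul_comm s3 (LRblock 1 i j), mul_assoc, mul_inv_cancel₀ s3_ne, mul_one]
      rcases eq_or_ne i j with hij | hij
      · simp [LRblock, blk, Jmat, hij, Matrix.one_apply]
        norm_num
      · rcases lt_or_gt_of_ne hij with hlt | hgt
        · simp [LRblock, blk, Jmat, hij, hlt, Matrix.one_apply]
        · simp [LRblock, blk, Jmat, hij, not_lt_of_gt hgt, Matrix.one_apply]
  refine ⟨d, hdpos, ?_⟩
  have main : ∀ (M : Matrix (Fin 5 ⊕ Fin 5) (Fin 5 ⊕ Fin 5) ℝ), M = Smat →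
      ∃ hS : M.IsHermitian, M.rank = 5 ∧
        (Finset.univ.filter fun i => 0 < hS.eigenvalues i).card = 4 ∧
        (Finset.univ.filter fun i => hS.eigenvalues i < 0).card = 1 := by
    rintro M rfl
    set ev := Smat_herm.eigenvalues with hev
    set A7 := Finset.univ.filter (fun i => ev i = 7) with hA7
    set A8 := Finset.univ.filter (fun i => ev i = -8) with hA8
    have hdisj : Disjoint A7 A8 := by
      rw [Finset.disjoint_left]
      intro x hx hx'
      rw [hA7, Finset.mem_filter] at hx
      rw [hA8, Finset.mem_filter] at hx'
      have h1 := hx.2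
      have h2 := hx'.2
      rw [h1] at h2
      norm_num at h2
    have e8 : (Finset.univ.filter fun i => ¬ ev i = 7).filter (fun i => ev i = -8) = A8 := by
      rw [Finset.filter_filter, hA8]
      apply Finset.filter_congr
      intro x _
      constructor
      · rintro ⟨-, hx⟩; exact hx
      · intro hx; exact ⟨by rw [hx]; norm_num, hx⟩
    have key : (20 : ℝ) = 7 * A7.card - 8 * A8.card := by
      rw [← eig_sum, ← hev,
        ← Finset.sum_filter_add_sum_filter_not Finset.univ (fun i => ev i = 7) ev,
        ← Finset.sum_filter_add_sum_filter_not
          (Finset.univ.filter fun i => ¬ ev i = 7) (fun i => ev i = -8) ev, e8]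
      have h7 : ∑ i ∈ A7, ev i = A7.card • (7 : ℝ) := by
        apply Finset.sum_eq_card_nsmul
        intro x hx
        rw [hA7] at hx
        exact (Finset.mem_filter.mp hx).2
      have h8 : ∑ i ∈ A8, ev i = A8.card • (-8 : ℝ) := by
        apply Finset.sum_eq_card_nsmul
        intro x hx
        rw [hA8] at hx
        exact (Finset.mem_filter.mp hx).2
      have h0 : ∑ i ∈ (Finset.univ.filter fun i => ¬ ev i = 7).filter (fun i => ¬ ev i = -8),
          ev i = 0 := by
        apply Finset.sum_eq_zero
        intro x hx
        rw [Finset.filter_filter, Finset.mem_filter] at hx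
        rcases eig_mem x with h | h | h
        · exact h
        · exact absurd h hx.2.1
        · exact absurd h hx.2.2
      rw [h7, h8, h0, nsmul_eq_mul, nsmul_eq_mul]
      ring
    have hle : A7.card + A8.card ≤ 10 := by
      have := Finset.card_le_univ (A7 ∪ A8)
      rw [Finset.card_union_of_disjoint hdisj] at this
      simpa using this
    have hnat : 7 * A7.card = 20 + 8 * A8.card := by
      have : (7 * A7.card : ℝ) = 20 + 8 * A8.card := by linarith
      exact_mod_cast this
    have hcards : A7.card = 4 ∧ A8.card = 1 := by omega
    have hpos7 : (Finset.univ.filter fun i => 0 < ev i) = A7 := by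
      rw [hA7]
      apply Finset.filter_congr
      intro x _
      constructor
      · intro hx
        rcases eig_mem x with h | h | h
        · rw [← hev] at h; linarith [hx, h.le]
        · exact hev ▸ h
        · rw [← hev] at h; linarith [hx, h.le]
      · intro hx; rw [hx]; norm_num
    have hneg8 : (Finset.univ.filter fun i => ev i < 0) = A8 := by
      rw [hA8]
      apply Finset.filter_congr
      intro x _
      constructor
      · intro hx
        rcases eig_mem x with h | h | h
        · rw [← hev] at h; linarith [hx, h.le]
        · rw [← hev] at h; rw [h] at hx; norm_num at hx
        · exact hev ▸ h
      · intro hx; rw [hx]; norm_num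
    have hrank : Smat.rank = 5 := by
      rw [Smat_herm.rank_eq_card_non_zero_eigs, Fintype.card_subtype]
      have hne : (Finset.univ.filter fun i => Smat_herm.eigenvalues i ≠ 0) = A7 ∪ A8 := by
        ext x
        simp only [Finset.mem_filter, Finset.mem_univ, true_and, Finset.mem_union, hA7, hA8]
        constructor
        · intro hx
          rcases eig_mem x with h | h | h
          · exact absurd h hx
          · exact Or.inl (hev ▸ h)
          · exact Or.inr (hev ▸ h)
        · rintro (hx | hx) <;> rw [← hev, hx] <;> norm_num
      rw [hne, Finset.card_union_of_disjoint hdisj, hcards.1, hcards.2]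
    exact ⟨Smat_herm, hrank, hpos7 ▸ hcards.1, hneg8 ▸ hcards.2⟩
  rw [hM]
  exact main Smat rfl
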